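/- Let T be a finite tree whose maximum degree satisfies Δ(T) ≥ 3, and let s be a nonzero real number. Then λ_max(M_T(s)) > 1 + √3·|s| + s^2. -/

import Mathlib

open scoped Classical
open Matrix Polynomial

/-- The deformed Laplacian matrix `M_G(s) = I - s·A(G) + s²·(D(G) - I)` of a finite
simple graph `G`. -/
noncomputable def deformedLap {V : Type*} [Fintype V] (G : SimpleGraph V) (s : ℝ) :
    Matrix V V ℝ :=
  1 - s • G.adjMatrix ℝ + s ^ 2 • (Matrix.diagonal (fun v => (G.degree v : ℝ)) - 1)

/-- The largest (real) eigenvalue of a matrix: the supremum of its real spectrum.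
For a real symmetric matrix this is the maximal eigenvalue (the paper's `ρ`). -/
noncomputable def lamMax {n : Type*} [Fintype n] (M : Matrix n n ℝ) : ℝ :=
  sSup (spectrum ℝ M)

lemma quad_form_le {n : Type*} [Fintype n]
    (U : Matrix n n ℝ) (hUU : U * star U = 1) (ev : n → ℝ) {μ : ℝ} (hμ : ∀ i, ev i ≤ μ)
    (x : n → ℝ) : x ⬝ᵥ ((U * diagonal ev * star U) *ᵥ x) ≤ μ * (x ⬝ᵥ x) := by
  have hst : star U *ᵥ x = x ᵥ* U := by
    rw [Matrix.star_eq_conjTranspose, Matrix.conjTranspose_eq_transpose_of_trivial,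
      mulVec_transpose]
  have hdiag : diagonal ev *ᵥ (x ᵥ* U) = fun i => ev i * (x ᵥ* U) i := by
    ext i; simp [Matrix.mulVec, diagonal_dotProduct]
  have hMx : (U * diagonal ev * star U) *ᵥ x = U *ᵥ (fun i => ev i * (x ᵥ* U) i) := by
    rw [← mulVec_mulVec, ← mulVec_mulVec, hst, hdiag]
  have h1 : x ⬝ᵥ ((U * diagonal ev * star U) *ᵥ x)
      = (x ᵥ* U) ⬝ᵥ (fun i => ev i * (x ᵥ* U) i) := by
    rw [hMx, dotProduct_mulVec]
  have h2 : x ⬝ᵥ x = (x ᵥ* U) ⬝ᵥ (x ᵥ* U) := by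
    calc x ⬝ᵥ x = x ⬝ᵥ ((U * star U) *ᵥ x) := by rw [hUU, one_mulVec]
    _ = (x ᵥ* U) ⬝ᵥ (star U *ᵥ x) := by rw [← mulVec_mulVec, dotProduct_mulVec]
    _ = (x ᵥ* U) ⬝ᵥ (x ᵥ* U) := by rw [hst]
  rw [h1, h2]
  unfold dotProduct
  rw [Finset.mul_sum]
  apply Finset.sum_le_sum
  intro i _
  have h := mul_le_mul_of_nonneg_right (hμ i) (mul_self_nonneg ((x ᵥ* U) i))
  calc (x ᵥ* U) i * ((fun i => ev i * (x ᵥ* U) i) i)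
      = ev i * ((x ᵥ* U) i * (x ᵥ* U) i) := by ring
  _ ≤ μ * ((x ᵥ* U) i * (x ᵥ* U) i) := h

lemma dot_mulVec_le_lamMax {n : Type*} [Fintype n] [Nonempty n]
    {M : Matrix n n ℝ} (hM : M.IsHermitian) (x : n → ℝ) :
    x ⬝ᵥ (M *ᵥ x) ≤ lamMax M * (x ⬝ᵥ x) := by
  obtain ⟨i₀, hi₀⟩ := Finite.exists_max hM.eigenvalues
  have hbdd : BddAbove (spectrum ℝ M) := (Matrix.finite_spectrum M).bddAbove
  have hle : hM.eigenvalues i₀ ≤ lamMax M :=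
    le_csSup hbdd (hM.eigenvalues_mem_spectrum_real i₀)
  have hxx : 0 ≤ x ⬝ᵥ x := Finset.sum_nonneg fun i _ => mul_self_nonneg _
  have hkey : M = (hM.eigenvectorUnitary : Matrix n n ℝ) * diagonal hM.eigenvalues *
      star (hM.eigenvectorUnitary : Matrix n n ℝ) := by simpa using hM.spectral_theorem
  have hUU : (hM.eigenvectorUnitary : Matrix n n ℝ) * star (hM.eigenvectorUnitary : Matrix n n ℝ)
      = 1 := hM.eigenvectorUnitary.2.2
  calc x ⬝ᵥ (M *ᵥ x)
      = x ⬝ᵥ (((hM.eigenvectorUnitary : Matrix n n ℝ) * diagonal hM.eigenvalues *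
        star (hM.eigenvectorUnitary : Matrix n n ℝ)) *ᵥ x) := by rw [← hkey]
  _ ≤ hM.eigenvalues i₀ * (x ⬝ᵥ x) := quad_form_le _ hUU _ hi₀ x
  _ ≤ lamMax M * (x ⬝ᵥ x) := mul_le_mul_of_nonneg_right hle hxx

lemma no_common_adj {V : Type*} {G : SimpleGraph V} (hG : G.IsAcyclic) {v a b : V}
    (hva : G.Adj v a) (hvb : G.Adj v b) (hab : a ≠ b) : ¬ G.Adj a b := by
  intro h
  have hp : (SimpleGraph.Walk.cons h SimpleGraph.Walk.nil).IsPath := by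
    simp [SimpleGraph.Walk.isPath_def, h.ne]
  have hq : (SimpleGraph.Walk.cons hva.symm
      (SimpleGraph.Walk.cons hvb SimpleGraph.Walk.nil)).IsPath := by
    simp [SimpleGraph.Walk.isPath_def, hva.ne', hab, hvb.ne]
  have heq := SimpleGraph.isAcyclic_iff_path_unique.mp hG ⟨_, hp⟩ ⟨_, hq⟩
  have hlen := congrArg (fun p : G.Path a b => p.1.length) heq
  simp [SimpleGraph.Walk.length_cons] at hlen

lemma sum_four {V : Type*} [Fintype V] [DecidableEq V] {v u₁ u₂ u₃ : V}
    (h01 : v ≠ u₁) (h02 : v ≠ u₂) (h03 : v ≠ u₃)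
    (h12 : u₁ ≠ u₂) (h13 : u₁ ≠ u₃) (h23 : u₂ ≠ u₃) (f : V → ℝ)
    (hf : ∀ w, w ≠ v → w ≠ u₁ → w ≠ u₂ → w ≠ u₃ → f w = 0) :
    ∑ w, f w = f v + f u₁ + f u₂ + f u₃ := by
  have h1 : ∑ w ∈ ({v, u₁, u₂, u₃} : Finset V), f w = ∑ w, f w := by
    apply Finset.sum_subset (Finset.subset_univ _)
    intro w _ hw
    simp only [Finset.mem_insert, Finset.mem_singleton, not_or] at hw
    exact hf w hw.1 hw.2.1 hw.2.2.1 hw.2.2.2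
  rw [← h1]
  rw [show ({v, u₁, u₂, u₃} : Finset V) = insert v (insert u₁ (insert u₂ {u₃})) from rfl]
  rw [Finset.sum_insert (by simp [h01, h02, h03]),
    Finset.sum_insert (by simp [h12, h13]),
    Finset.sum_insert (by simp [h23]), Finset.sum_singleton]
  ring

lemma arith_key (t r : ℝ) (ht : 0 < t) (hr : r ^ 2 = 3) (hrn : 0 ≤ r) :
    (1 + r * t + t ^ 2) * ((r + t) ^ 2 + 3)
      < ((r + t) ^ 2 + 3) + 6 * (r + t) * t + t ^ 2 * (2 * (r + t) ^ 2) := by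
  nlinarith [mul_nonneg hrn (mul_nonneg (mul_nonneg ht.le ht.le) ht.le), pow_pos ht 4,
    mul_pos ht ht]

set_option maxHeartbeats 1000000 in
/-- If a tree `T` has maximum degree at least `3` and `s ≠ 0`, then
`λ_max(M_T(s)) > 1 + √3·|s| + s²`. -/
theorem stmt_12 {V : Type*} [Fintype V] (T : SimpleGraph V) (hT : T.IsTree)
    (hΔ : 3 ≤ T.maxDegree) (s : ℝ) (hs : s ≠ 0) :
    1 + Real.sqrt 3 * |s| + s ^ 2 < lamMax (deformedLap T s) := by
  have hne : Nonempty V := hT.isConnected.nonempty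
  obtain ⟨v, hv⟩ := T.exists_maximal_degree_vertex
  have hdeg : 3 ≤ T.degree v := hv ▸ hΔ
  have hcard : 3 ≤ (T.neighborFinset v).card := by
    rwa [T.card_neighborFinset_eq_degree v]
  obtain ⟨t3, ht3sub, ht3card⟩ := Finset.exists_subset_card_eq hcard
  obtain ⟨u₁, u₂, u₃, h12, h13, h23, rfl⟩ := Finset.card_eq_three.mp ht3card
  have hu1 : T.Adj v u₁ := by
    rw [← SimpleGraph.mem_neighborFinset]; exact ht3sub (by simp)
  have hu2 : T.Adj v u₂ := by
    rw [← SimpleGraph.mem_neighborFinset]; exact ht3sub (by simp)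
  have hu3 : T.Adj v u₃ := by
    rw [← SimpleGraph.mem_neighborFinset]; exact ht3sub (by simp)
  have h01 : v ≠ u₁ := hu1.ne
  have h02 : v ≠ u₂ := hu2.ne
  have h03 : v ≠ u₃ := hu3.ne
  have hn12 : ¬ T.Adj u₁ u₂ := no_common_adj hT.2 hu1 hu2 h12
  have hn13 : ¬ T.Adj u₁ u₃ := no_common_adj hT.2 hu1 hu3 h13
  have hn23 : ¬ T.Adj u₂ u₃ := no_common_adj hT.2 hu2 hu3 h23
  set t : ℝ := |s| with htdef
  have ht : 0 < t := abs_pos.mpr hs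
  set a : ℝ := Real.sqrt 3 + t with hadef
  set b : ℝ := if 0 < s then (-1 : ℝ) else 1 with hbdef
  have hsb : s * b = -t := by
    rw [hbdef, htdef]
    rcases lt_trichotomy s 0 with h | h | h
    · rw [if_neg (by linarith), abs_of_neg h]; ring
    · exact absurd h hs
    · rw [if_pos h, abs_of_pos h]; ring
  have hbb : b * b = 1 := by rw [hbdef]; split_ifs <;> norm_num
  set x : V → ℝ := fun w =>
    if w = v then a else if w = u₁ ∨ w = u₂ ∨ w = u₃ then b else 0 with hxdef
  have hxv : x v = a := by simp [hxdef]
  have hxu1 : x u₁ = b := by simp [hxdef, h01.symm]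
  have hxu2 : x u₂ = b := by simp [hxdef, h02.symm]
  have hxu3 : x u₃ = b := by simp [hxdef, h03.symm]
  have hx0 : ∀ w, w ≠ v → w ≠ u₁ → w ≠ u₂ → w ≠ u₃ → x w = 0 := by
    intro w hw0 hw1 hw2 hw3
    simp [hxdef, hw0, hw1, hw2, hw3]
  -- the squared norm
  have hS1 : x ⬝ᵥ x = a ^ 2 + 3 := by
    unfold dotProduct
    rw [sum_four h01 h02 h03 h12 h13 h23 _
      (fun w hw0 hw1 hw2 hw3 => by rw [hx0 w hw0 hw1 hw2 hw3]; ring)]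
    rw [hxv, hxu1, hxu2, hxu3]
    nlinarith [hbb]
  -- neighbor sums
  have hgv : ∑ u ∈ T.neighborFinset v, x u = 3 * b := by
    have hz : ∀ u ∈ T.neighborFinset v, u ∉ ({u₁, u₂, u₃} : Finset V) → x u = 0 := by
      intro u hu hnu
      simp only [Finset.mem_insert, Finset.mem_singleton, not_or] at hnu
      have hadj : T.Adj v u := (SimpleGraph.mem_neighborFinset _ _ _).mp hu
      exact hx0 u hadj.ne' hnu.1 hnu.2.1 hnu.2.2
    rw [← Finset.sum_subset ht3sub hz,
      Finset.sum_insert (by simp [h12, h13]), Finset.sum_insert (by simp [h23]),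
      Finset.sum_singleton, hxu1, hxu2, hxu3]
    ring
  have hgu : ∀ u' : V, T.Adj v u' → (∀ j : V, j ≠ u' → j = u₁ ∨ j = u₂ ∨ j = u₃ → ¬ T.Adj u' j) →
      ∑ u ∈ T.neighborFinset u', x u = a := by
    intro u' hadj hnadj
    have hsub : ({v} : Finset V) ⊆ T.neighborFinset u' := by
      simp [SimpleGraph.mem_neighborFinset, hadj.symm]
    have hz : ∀ u ∈ T.neighborFinset u', u ∉ ({v} : Finset V) → x u = 0 := by
      intro u hu hnu
      simp only [Finset.mem_singleton] at hnu
      have hadju : T.Adj u' u := (SimpleGraph.mem_neighborFinset _ _ _).mp hu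
      refine hx0 u hnu ?_ ?_ ?_
      · intro h; exact hnadj u hadju.ne' (Or.inl h) hadju
      · intro h; exact hnadj u hadju.ne' (Or.inr (Or.inl h)) hadju
      · intro h; exact hnadj u hadju.ne' (Or.inr (Or.inr h)) hadju
    rw [← Finset.sum_subset hsub hz, Finset.sum_singleton, hxv]
  have hg1 : ∑ u ∈ T.neighborFinset u₁, x u = a := by
    refine hgu u₁ hu1 ?_
    rintro j hj (rfl | rfl | rfl)
    · exact absurd rfl hj
    · exact hn12
    · exact hn13
  have hg2 : ∑ u ∈ T.neighborFinset u₂, x u = a := by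
    refine hgu u₂ hu2 ?_
    rintro j hj (rfl | rfl | rfl)
    · exact fun h => hn12 h.symm
    · exact absurd rfl hj
    · exact hn23
  have hg3 : ∑ u ∈ T.neighborFinset u₃, x u = a := by
    refine hgu u₃ hu3 ?_
    rintro j hj (rfl | rfl | rfl)
    · exact fun h => hn13 h.symm
    · exact fun h => hn23 h.symm
    · exact absurd rfl hj
  -- adjacency quadratic form
  have hS2 : x ⬝ᵥ (T.adjMatrix ℝ *ᵥ x) = 6 * (a * b) := by
    unfold dotProduct
    simp only [SimpleGraph.adjMatrix_mulVec_apply]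
    rw [sum_four h01 h02 h03 h12 h13 h23 _
      (fun w hw0 hw1 hw2 hw3 => by rw [hx0 w hw0 hw1 hw2 hw3]; ring)]
    rw [hxv, hxu1, hxu2, hxu3, hgv, hg1, hg2, hg3]
    ring
  -- degree quadratic form lower bound
  have hSD : 3 * a ^ 2 + 3 ≤ x ⬝ᵥ (Matrix.diagonal (fun w => (T.degree w : ℝ)) *ᵥ x) := by
    have hdv : Matrix.diagonal (fun w => (T.degree w : ℝ)) *ᵥ x
        = fun w => (T.degree w : ℝ) * x w := by
      ext w; simp [Matrix.mulVec, diagonal_dotProduct]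
    rw [hdv]
    unfold dotProduct
    have hK : ∑ w ∈ ({v, u₁, u₂, u₃} : Finset V), x w * ((T.degree w : ℝ) * x w)
        ≤ ∑ w, x w * ((T.degree w : ℝ) * x w) := by
      apply Finset.sum_le_sum_of_subset_of_nonneg (Finset.subset_univ _)
      intro w _ _
      have h1 : (0:ℝ) ≤ (T.degree w : ℝ) := Nat.cast_nonneg _
      nlinarith [mul_self_nonneg (x w)]
    refine le_trans ?_ hK
    rw [show ({v, u₁, u₂, u₃} : Finset V) = insert v (insert u₁ (insert u₂ {u₃})) from rfl,
      Finset.sum_insert (by simp [h01, h02, h03]),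
      Finset.sum_insert (by simp [h12, h13]),
      Finset.sum_insert (by simp [h23]), Finset.sum_singleton,
      hxv, hxu1, hxu2, hxu3]
    have hd1 : 1 ≤ T.degree u₁ := (T.degree_pos_iff_exists_adj u₁).mpr ⟨v, hu1.symm⟩
    have hd2 : 1 ≤ T.degree u₂ := (T.degree_pos_iff_exists_adj u₂).mpr ⟨v, hu2.symm⟩
    have hd3 : 1 ≤ T.degree u₃ := (T.degree_pos_iff_exists_adj u₃).mpr ⟨v, hu3.symm⟩
    have c0 : (3:ℝ) ≤ (T.degree v : ℝ) := by exact_mod_cast hdeg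
    have c1 : (1:ℝ) ≤ (T.degree u₁ : ℝ) := by exact_mod_cast hd1
    have c2 : (1:ℝ) ≤ (T.degree u₂ : ℝ) := by exact_mod_cast hd2
    have c3 : (1:ℝ) ≤ (T.degree u₃ : ℝ) := by exact_mod_cast hd3
    nlinarith [sq_nonneg a, hbb]
  -- hermitian
  have hHerm : (deformedLap T s).IsHermitian := by
    unfold deformedLap Matrix.IsHermitian
    ext i j
    by_cases h : i = j
    · subst h; simp
    · simp [Matrix.one_apply, Matrix.diagonal_apply, h, Ne.symm h, T.adj_comm i j]
  -- expansion of the quadratic form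
  have hQ : x ⬝ᵥ (deformedLap T s *ᵥ x)
      = (x ⬝ᵥ x) - s * (x ⬝ᵥ (T.adjMatrix ℝ *ᵥ x))
        + s ^ 2 * ((x ⬝ᵥ (Matrix.diagonal (fun w => (T.degree w : ℝ)) *ᵥ x)) - (x ⬝ᵥ x)) := by
    simp only [deformedLap, Matrix.add_mulVec, Matrix.sub_mulVec, Matrix.smul_mulVec,
      Matrix.one_mulVec, dotProduct_add, dotProduct_sub, dotProduct_smul, smul_eq_mul]
  -- lower bound for the quadratic form
  have hs2 : s ^ 2 = t ^ 2 := by rw [htdef, sq_abs]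
  have hQlb : (1 + Real.sqrt 3 * t + t ^ 2) * (a ^ 2 + 3) < x ⬝ᵥ (deformedLap T s *ᵥ x) := by
    rw [hQ, hS1, hS2]
    have key1 : s * (6 * (a * b)) = -(6 * a * t) := by
      calc s * (6 * (a * b)) = 6 * a * (s * b) := by ring
      _ = -(6 * a * t) := by rw [hsb]; ring
    rw [key1]
    have key2 : t ^ 2 * (2 * a ^ 2)
        ≤ s ^ 2 * ((x ⬝ᵥ (Matrix.diagonal (fun w => (T.degree w : ℝ)) *ᵥ x)) - (a ^ 2 + 3)) := by
      rw [hs2]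
      have h2 : 2 * a ^ 2 ≤ (x ⬝ᵥ (Matrix.diagonal (fun w => (T.degree w : ℝ)) *ᵥ x))
          - (a ^ 2 + 3) := by linarith [hSD]
      exact mul_le_mul_of_nonneg_left h2 (sq_nonneg t)
    have hmain := arith_key t (Real.sqrt 3) ht (Real.sq_sqrt (by norm_num)) (Real.sqrt_nonneg 3)
    rw [hadef]
    rw [hadef] at key2
    linarith [hmain, key2]
  -- conclude via Rayleigh
  have hray := dot_mulVec_le_lamMax hHerm x
  rw [hS1] at hray
  have hpos : (0:ℝ) < a ^ 2 + 3 := by positivity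
  have hfin : (1 + Real.sqrt 3 * t + t ^ 2) * (a ^ 2 + 3)
      < lamMax (deformedLap T s) * (a ^ 2 + 3) := lt_of_lt_of_le hQlb hray
  have := lt_of_mul_lt_mul_right hfin hpos.le
  rw [htdef, sq_abs] at this
  exact this
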